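/- For every real number c > 0 and every natural number n ≥ 1, one has 1/n! = (1/(2π)) ∫_{-∞}^{∞} e^{c + i t} / (c + i t)^{n+1} dt, where the integrand is absolutely integrable over ℝ. -/

import Mathlib

open MeasureTheory

open Set Filter Real Complex FourierTransform
open scoped Topology

lemma gammaLike_integrable {w : ℂ} (hw : 0 < w.re) (k : ℕ) :
    IntegrableOn (fun x : ℝ => (x : ℂ) ^ k * Complex.exp (-(w * x))) (Ioi 0) := by
  have hreal : IntegrableOn (fun x : ℝ => x ^ k * Real.exp (-(w.re * x))) (Ioi 0) := by
    have h := integrableOn_rpow_mul_exp_neg_mul_rpow (p := 1) (s := (k : ℝ)) (b := w.re)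
      (by linarith [Nat.cast_nonneg (α := ℝ) k]) zero_lt_one hw
    refine h.congr_fun (fun x hx => ?_) measurableSet_Ioi
    beta_reduce
    rw [Real.rpow_one, Real.rpow_natCast, neg_mul]
  refine hreal.mono' ((Continuous.aestronglyMeasurable (by continuity)).restrict) ?_
  filter_upwards [ae_restrict_mem measurableSet_Ioi] with x hx
  rw [norm_mul, norm_pow, Complex.norm_real, Complex.norm_exp,
    Real.norm_eq_abs, abs_of_pos (hx : (0:ℝ) < x)]
  simp [Complex.mul_re]

lemma tendsto_pow_mul_cexp {w : ℂ} (hw : 0 < w.re) (k : ℕ) (a : ℂ) :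
    Tendsto (fun x : ℝ => a * ((x : ℂ) ^ k * Complex.exp (-(w * x)))) atTop (𝓝 0) := by
  have h1 : Tendsto (fun x : ℝ => (w.re * x) ^ k * Real.exp (-(w.re * x))) atTop (𝓝 0) :=
    (tendsto_pow_mul_exp_neg_atTop_nhds_zero k).comp (tendsto_id.const_mul_atTop hw)
  have h2 : Tendsto (fun x : ℝ => ‖a‖ * ((w.re)⁻¹ ^ k * ((w.re * x) ^ k * Real.exp (-(w.re * x)))))
      atTop (𝓝 0) := by
    simpa using (h1.const_mul ((w.re)⁻¹ ^ k)).const_mul ‖a‖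
  refine squeeze_zero_norm' ?_ h2
  filter_upwards [eventually_ge_atTop (0 : ℝ)] with x hx
  rw [norm_mul, norm_mul, norm_pow, Complex.norm_exp,
    Complex.norm_real, Real.norm_eq_abs, _root_.abs_of_nonneg hx]
  have : (w.re)⁻¹ ^ k * (w.re * x) ^ k = x ^ k := by
    rw [mul_pow, ← mul_assoc, ← mul_pow, inv_mul_cancel₀ hw.ne', one_pow, one_mul]
  rw [← mul_assoc (w.re⁻¹ ^ k), this]
  simp [Complex.mul_re]

lemma gammaLike_integral {w : ℂ} (hw : 0 < w.re) : ∀ k : ℕ,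
    ∫ x in Ioi (0:ℝ), (x : ℂ) ^ k * Complex.exp (-(w * x)) = k.factorial / w ^ (k + 1) := by
  have hw0 : w ≠ 0 := fun h => by simp [h] at hw
  have hid : ∀ x : ℝ, HasDerivAt (fun y : ℝ => ((y : ℂ))) 1 x := fun x => by
    simpa using (hasDerivAt_id x).ofReal_comp
  intro k
  induction k with
  | zero =>
    have hder : ∀ x ∈ Ioi (0:ℝ), HasDerivAt (fun y : ℝ => -w⁻¹ * Complex.exp (-(w * y)))
        ((fun y : ℝ => (y : ℂ) ^ 0 * Complex.exp (-(w * y))) x) x := by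
      intro x _
      have h2 := ((((hid x).const_mul w).neg).cexp).const_mul (-w⁻¹)
      convert h2 using 1
      · rfl
      · rfl
      field_simp
      rfl
    have := integral_Ioi_of_hasDerivAt_of_tendsto
      (f := fun y : ℝ => -w⁻¹ * Complex.exp (-(w * y)))
      (Continuous.continuousWithinAt (by continuity)) hder (gammaLike_integrable hw 0)
      (by simpa using tendsto_pow_mul_cexp hw 0 (-w⁻¹))
    rw [this]
    simp
  | succ k ih =>
    set A : ℝ → ℂ := fun x => (x : ℂ) ^ (k+1) * Complex.exp (-(w * x)) with hA
    set B : ℝ → ℂ := fun x => (x : ℂ) ^ k * Complex.exp (-(w * x)) with hB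
    have hder : ∀ x ∈ Ioi (0:ℝ), HasDerivAt (fun y : ℝ => -w⁻¹ * ((y:ℂ)^(k+1) * Complex.exp (-(w * y))))
        (A x - ((k+1 : ℂ) * w⁻¹) * B x) x := by
      intro x _
      have hp := (hasDerivAt_pow (k+1) ((x:ℂ))).comp_ofReal
      have he : HasDerivAt (fun y : ℝ => Complex.exp (-(w * y))) (Complex.exp (-(w * x)) * -(w * 1)) x :=
        (((hid x).const_mul w).neg).cexp
      have h2 := (hp.mul he).const_mul (-w⁻¹)
      convert h2 using 1
      · rfl
      · rfl
      simp only [hA, hB]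
      push_cast
      field_simp
      ring
    have hintA := gammaLike_integrable hw (k+1)
    have hintB := (gammaLike_integrable hw k).const_mul ((k+1 : ℂ) * w⁻¹)
    have hFTC := integral_Ioi_of_hasDerivAt_of_tendsto
      (f := fun y : ℝ => -w⁻¹ * ((y:ℂ)^(k+1) * Complex.exp (-(w * y))))
      (Continuous.continuousWithinAt (by continuity)) hder (hintA.sub hintB)
      (tendsto_pow_mul_cexp hw (k+1) (-w⁻¹))
    rw [integral_sub hintA hintB] at hFTC
    simp only [Complex.ofReal_zero, ne_eq, zero_pow (Nat.succ_ne_zero k), zero_mul, mul_zero,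
      sub_zero, zero_sub, neg_zero] at hFTC
    have : ∫ x in Ioi (0:ℝ), A x = ((k+1 : ℂ) * w⁻¹) * ∫ x in Ioi (0:ℝ), B x := by
      rw [integral_const_mul] at hFTC
      linear_combination hFTC
    rw [this, ih, Nat.factorial_succ]
    push_cast
    field_simp
    ring

lemma vertical_ne {c : ℝ} (hc : 0 < c) (t : ℝ) : (c : ℂ) + Complex.I * t ≠ 0 := by
  intro h
  have := congrArg Complex.re h
  simp [Complex.add_re, Complex.mul_re] at this
  linarith

lemma vertical_integrable {c : ℝ} (hc : 0 < c) (n : ℕ) (hn : 1 ≤ n) :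
    Integrable (fun t : ℝ => (((c : ℂ) + Complex.I * t) ^ (n + 1))⁻¹) := by
  have hcont : Continuous fun t : ℝ => (((c : ℂ) + Complex.I * t) ^ (n + 1))⁻¹ :=
    Continuous.inv₀ (by continuity) fun t => pow_ne_zero _ (vertical_ne hc t)
  have h1 : Integrable (fun t : ℝ => (1 + (t / c) ^ 2)⁻¹) :=
    integrable_inv_one_add_sq.comp_div hc.ne'
  have heq : ∀ t : ℝ, ((c : ℝ) ^ 2)⁻¹ * (1 + (t / c) ^ 2)⁻¹ = (c ^ 2 + t ^ 2)⁻¹ := by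
    intro t
    rw [← mul_inv]
    congr 1
    field_simp
  have hbase : Integrable (fun t : ℝ => (c ^ 2 + t ^ 2)⁻¹) :=
    (h1.const_mul _).congr (Filter.Eventually.of_forall fun t => heq t)
  refine (hbase.const_mul ((c ^ (n - 1))⁻¹)).mono' hcont.aestronglyMeasurable
    (Filter.Eventually.of_forall fun t => ?_)
  have hsq : ‖(c : ℂ) + Complex.I * t‖ ^ 2 = c ^ 2 + t ^ 2 := by
    rw [Complex.sq_norm, Complex.normSq_apply]
    simp [Complex.add_re, Complex.add_im, Complex.mul_re, Complex.mul_im]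
    ring
  have habs : c ≤ ‖(c : ℂ) + Complex.I * t‖ := by
    have h := Complex.re_le_norm ((c : ℂ) + Complex.I * t)
    simpa [Complex.add_re, Complex.mul_re] using h
  have hpos : (0:ℝ) < c ^ 2 + t ^ 2 := by positivity
  have h2 : (c ^ 2 + t ^ 2) * c ^ (n - 1) ≤ ‖(c : ℂ) + Complex.I * t‖ ^ (n + 1) := by
    have hsplit : ‖(c : ℂ) + Complex.I * t‖ ^ (n + 1)
        = ‖(c : ℂ) + Complex.I * t‖ ^ 2 * ‖(c : ℂ) + Complex.I * t‖ ^ (n - 1) := by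
      rw [← pow_add]
      congr 1
      omega
    rw [hsplit, hsq]
    exact mul_le_mul_of_nonneg_left (pow_le_pow_left₀ hc.le habs _) hpos.le
  rw [norm_inv, norm_pow]
  calc (‖(c : ℂ) + Complex.I * t‖ ^ (n + 1))⁻¹
      ≤ ((c ^ 2 + t ^ 2) * c ^ (n - 1))⁻¹ := by gcongr
    _ = (c ^ (n - 1))⁻¹ * (c ^ 2 + t ^ 2)⁻¹ := by rw [mul_inv]; ring


/-- For every real `c > 0` and natural `n ≥ 1`,
`1/n! = (1/(2π)) ∫_{-∞}^{∞} exp(c + i t) / (c + i t)^(n+1) dt`,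
the integrand being (absolutely) integrable over `ℝ`. -/
theorem reciprocal_factorial_integral (c : ℝ) (hc : 0 < c) (n : ℕ) (hn : 1 ≤ n) :
    Integrable (fun t : ℝ =>
        Complex.exp ((c : ℂ) + Complex.I * (t : ℂ)) /
          ((c : ℂ) + Complex.I * (t : ℂ)) ^ (n + 1)) ∧
    (1 / (n.factorial : ℂ)) =
      ((2 * Real.pi : ℝ) : ℂ)⁻¹ *
        ∫ t : ℝ,
          Complex.exp ((c : ℂ) + Complex.I * (t : ℂ)) /
            ((c : ℂ) + Complex.I * (t : ℂ)) ^ (n + 1) := by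
  set G : ℝ → ℂ := fun t =>
    Complex.exp ((c : ℂ) + Complex.I * t) / ((c : ℂ) + Complex.I * t) ^ (n + 1) with hG
  have hGint : Integrable G := by
    have := (vertical_integrable hc n hn).bdd_mul
      (f := fun t : ℝ => Complex.exp ((c : ℂ) + Complex.I * t))
      (Continuous.aestronglyMeasurable (by continuity))
      (c := Real.exp c) (Filter.Eventually.of_forall fun t => by
        rw [Complex.norm_exp]
        simp [Complex.add_re, Complex.mul_re])
    refine this.congr (Filter.Eventually.of_forall fun t => ?_)
    simp [hG, div_eq_mul_inv]
  refine ⟨hGint, ?_⟩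
  -- the compactly-supported-at-left profile
  set g : ℝ → ℂ := fun x => (x : ℂ) ^ n * Complex.exp (-((c : ℂ) * x)) with hg
  set f : ℝ → ℂ := Set.indicator (Set.Ioi 0) g with hf
  have hcre : (0 : ℝ) < ((c : ℂ)).re := by simpa using hc
  have hfint : Integrable f := by
    rw [hf, integrable_indicator_iff measurableSet_Ioi]
    exact gammaLike_integrable hcre n
  have hF : ∀ ξ : ℝ, 𝓕 f ξ =
      (n.factorial : ℂ) / ((c : ℂ) + Complex.I * (2 * Real.pi * ξ)) ^ (n + 1) := by
    intro ξ
    rw [Real.fourier_real_eq_integral_exp_smul]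
    have : ∀ v : ℝ, Complex.exp ((-2 * Real.pi * v * ξ : ℝ) * Complex.I) • f v =
        Set.indicator (Set.Ioi 0)
          (fun v : ℝ => (v : ℂ) ^ n *
            Complex.exp (-(((c : ℂ) + Complex.I * (2 * Real.pi * ξ)) * v))) v := by
      intro v
      rw [hf, smul_eq_mul]
      by_cases hv : v ∈ Set.Ioi (0:ℝ)
      · rw [Set.indicator_of_mem hv, Set.indicator_of_mem hv, hg]
        rw [mul_left_comm, ← Complex.exp_add]
        congr 2
        push_cast
        ring
      · rw [Set.indicator_of_notMem hv, Set.indicator_of_notMem hv, mul_zero]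
    rw [funext this, integral_indicator measurableSet_Ioi]
    exact gammaLike_integral (by simpa using hc) n
  have h'F : Integrable (𝓕 f) := by
    rw [funext hF]
    have hV := ((vertical_integrable hc n hn).comp_mul_left'
      (R := 2 * Real.pi) (by positivity)).const_mul (n.factorial : ℂ)
    refine hV.congr (Filter.Eventually.of_forall fun ξ => ?_)
    push_cast
    simp [div_eq_mul_inv]
  have hcontf : ContinuousAt f 1 := by
    have hgc : ContinuousAt g 1 := by fun_prop
    refine hgc.congr ?_
    filter_upwards [Ioi_mem_nhds (zero_lt_one : (0:ℝ) < 1)] with v hv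
    rw [hf, Set.indicator_of_mem hv]
  have hinv := hfint.fourierInv_fourier_eq h'F hcontf
  rw [Real.fourierInv_eq_fourier_neg,
    Real.fourier_real_eq_integral_exp_smul] at hinv
  have hf1 : f 1 = Complex.exp (-(c : ℂ)) := by
    rw [hf, Set.indicator_of_mem (by norm_num : (1:ℝ) ∈ Set.Ioi 0), hg]
    norm_num
  rw [hf1] at hinv
  have hrw : ∀ ξ : ℝ, Complex.exp ((-2 * Real.pi * ξ * (-1) : ℝ) * Complex.I) • 𝓕 f ξ =
      ((n.factorial : ℂ) * Complex.exp (-(c : ℂ))) * G (2 * Real.pi * ξ) := by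
    intro ξ
    rw [smul_eq_mul, hF ξ, hG]
    have : Complex.exp ((-2 * Real.pi * ξ * (-1) : ℝ) * Complex.I) =
        Complex.exp (-(c : ℂ)) * Complex.exp ((c : ℂ) + Complex.I * (2 * Real.pi * ξ)) := by
      rw [← Complex.exp_add]
      congr 1
      push_cast
      ring
    rw [this]
    simp only [div_eq_mul_inv]
    push_cast
    ring
  rw [funext hrw, integral_const_mul, MeasureTheory.Measure.integral_comp_mul_left G (2 * Real.pi)] at hinv
  have hpi : (0:ℝ) < 2 * Real.pi := by positivity
  rw [abs_of_pos (inv_pos.mpr hpi)] at hinv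
  have hexp : Complex.exp (-(c : ℂ)) ≠ 0 := Complex.exp_ne_zero _
  have hfac : ((n.factorial : ℂ)) ≠ 0 := by
    exact_mod_cast Nat.cast_ne_zero.mpr n.factorial_ne_zero
  rw [Complex.real_smul] at hinv
  push_cast at hinv
  have hπc : (2 * (Real.pi : ℂ)) ≠ 0 :=
    mul_ne_zero two_ne_zero (Complex.ofReal_ne_zero.mpr Real.pi_ne_zero)
  have h3 : (n.factorial : ℂ) * ∫ y, G y = 2 * (Real.pi : ℂ) := by
    apply mul_left_cancel₀ hexp
    field_simp at hinv
    linear_combination (Complex.exp (-(c : ℂ))) * hinv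
  push_cast
  field_simp
  linear_combination (-1 : ℂ) * h3
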